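/- arXiv:2107.08725 — 7 statements merged into one kernel-verified Lean document; each statement's English description precedes it below -/
import Mathlib

section
/- For integers k ≥ 2, A ≥ 2, and 1 ≤ α ≤ A-1, given a packing into A bins where: the total size S of items in some α+1 designated bins satisfies S > (α+1)/2, these α+1 bins contain at least α items total (at least one each among α of them), and the other A-α-1 bins contain k items each, the total weight under w(x) = (2(k-1)x+2)/(k+1) is at least A. -/
theorem stmt_2 (k A α : ℤ) (hk : 2 ≤ k) (hA : 2 ≤ A) (hα1 : 1 ≤ α) (hα2 : α ≤ A - 1)
    (S : ℝ) (n : ℤ) (hS : ((α : ℝ) + 1) / 2 < S) (hn : k * A - (k - 1) * (α + 1) ≤ n) :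
    (A : ℝ) ≤ (2 * ((k : ℝ) - 1) * S + 2 * (n : ℝ)) / ((k : ℝ) + 1) := by
  have hk' : (2:ℝ) ≤ (k:ℝ) := by exact_mod_cast hk
  have hn' : (k:ℝ) * A - (k - 1) * (α + 1) ≤ (n:ℝ) := by exact_mod_cast hn
  have hα2' : (α:ℝ) ≤ (A:ℝ) - 1 := by exact_mod_cast hα2
  rw [le_div_iff₀ (by linarith)]
  nlinarith [hS, hn', hα2', hk']
end

section
/- For integers k ≥ 2, t ≥ 2 with k ≥ t, and integers A ≥ 2, α ≥ 1 with α ≤ A-1: (1/(k+1))·(2(k-t)·((α-1)(1-1/t)+1) + 2(kA - (k-t)α - (k-1))) ≥ A. -/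
theorem stmt_5 (k t A α : ℤ) (hk : 2 ≤ k) (ht : 2 ≤ t) (hkt : t ≤ k)
    (hA : 2 ≤ A) (hα1 : 1 ≤ α) (hα2 : α ≤ A - 1) :
    (A : ℝ) ≤ (1 / ((k : ℝ) + 1)) *
      (2 * ((k : ℝ) - t) * (((α : ℝ) - 1) * (1 - 1 / (t : ℝ)) + 1)
        + 2 * ((k : ℝ) * A - ((k : ℝ) - t) * α - ((k : ℝ) - 1))) := by
  have hkR : (2:ℝ) ≤ k := by exact_mod_cast hk
  have htR : (2:ℝ) ≤ t := by exact_mod_cast ht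
  have hktR : (t:ℝ) ≤ k := by exact_mod_cast hkt
  have hAR : (2:ℝ) ≤ A := by exact_mod_cast hA
  have hα1R : (1:ℝ) ≤ α := by exact_mod_cast hα1
  have hα2R : (α:ℝ) ≤ A - 1 := by exact_mod_cast hα2
  have h1 : (0:ℝ) < (k:ℝ) + 1 := by linarith
  have ht0 : (0:ℝ) < (t:ℝ) := by linarith
  rw [one_div, inv_mul_eq_div, le_div_iff₀ h1]
  have key : ((k:ℝ) - t) * ((α:ℝ) - 1) * ((t:ℝ) - 2) ≥ 0 := by
    apply mul_nonneg (mul_nonneg (by linarith) (by linarith)) (by linarith)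
  field_simp
  nlinarith [mul_nonneg (mul_nonneg (sub_nonneg.2 hktR) (sub_nonneg.2 hα1R)) (by linarith : (0:ℝ) ≤ (t:ℝ) - 2),
    mul_nonneg (sub_nonneg.2 hktR) (by linarith : (0:ℝ) ≤ A - 1 - α),
    mul_nonneg (by linarith : (0:ℝ) ≤ (t:ℝ) - 1) (by linarith : (0:ℝ) ≤ (A:ℝ) - 2),
    mul_pos ht0 h1, mul_nonneg (mul_nonneg (by linarith : (0:ℝ) ≤ (t:ℝ)-1) (by linarith : (0:ℝ) ≤ (A:ℝ)-2)) ht0.le]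
end

section
/- For every integer d ≥ 2, any d-dimensional vector packing instance partitioned into clusters, where each cluster's optimal packing (by First Fit) uses at least 2 bins, satisfies: the sum over clusters of optimal bin counts is at most 2d times the global optimal bin count. -/
/-- A finite set `S` of items with `d`-dimensional sizes `v` can be packed into `B` bins,
where each bin's componentwise total is at most `1` in every coordinate. -/
def VPFeasible (d : ℕ) {ι : Type*} [DecidableEq ι] (v : ι → Fin d → ℝ)
    (S : Finset ι) (B : ℕ) : Prop :=
  ∃ f : ι → Fin B, ∀ j : Fin B, ∀ c : Fin d,
    ∑ i ∈ S.filter (fun i => f i = j), v i c ≤ 1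

/-- The optimal number of bins for packing `S`. -/
noncomputable def VPopt (d : ℕ) {ι : Type*} [DecidableEq ι] (v : ι → Fin d → ℝ)
    (S : Finset ι) : ℕ :=
  sInf {B | VPFeasible d v S B}

/-- Each item in its own bin is feasible. -/
lemma VPFeasible_card_succ (d : ℕ) {ι : Type*} [DecidableEq ι] (v : ι → Fin d → ℝ)
    (hv : ∀ i c, 0 ≤ v i c ∧ v i c ≤ 1) (S : Finset ι) :
    VPFeasible d v S (S.card + 1) := by
  classical
  refine ⟨fun i => if h : i ∈ S then (S.equivFin ⟨i, h⟩).castSucc else ⟨0, Nat.succ_pos _⟩,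
    fun j c => ?_⟩
  set f : ι → Fin (S.card + 1) :=
    fun i => if h : i ∈ S then (S.equivFin ⟨i, h⟩).castSucc else ⟨0, Nat.succ_pos _⟩ with hf
  have hcard : (S.filter (fun i => f i = j)).card ≤ 1 := by
    refine Finset.card_le_one.mpr ?_
    intro a ha b hb
    simp only [Finset.mem_filter] at ha hb
    obtain ⟨haS, haj⟩ := ha
    obtain ⟨hbS, hbj⟩ := hb
    simp only [hf, dif_pos haS] at haj
    simp only [hf, dif_pos hbS] at hbj
    have : (S.equivFin ⟨a, haS⟩).castSucc = (S.equivFin ⟨b, hbS⟩).castSucc := by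
      rw [haj, hbj]
    have := S.equivFin.injective (Fin.castSucc_injective _ this)
    exact Subtype.ext_iff.mp this
  calc ∑ i ∈ S.filter (fun i => f i = j), v i c
      ≤ ∑ i ∈ S.filter (fun i => f i = j), 1 :=
        Finset.sum_le_sum (fun i _ => (hv i c).2)
    _ = ((S.filter (fun i => f i = j)).card : ℝ) := by simp
    _ ≤ 1 := by exact_mod_cast hcard

lemma VPopt_feasible (d : ℕ) {ι : Type*} [DecidableEq ι] (v : ι → Fin d → ℝ)
    (hv : ∀ i c, 0 ≤ v i c ∧ v i c ≤ 1) (S : Finset ι) :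
    VPFeasible d v S (VPopt d v S) := by
  have hne : {B | VPFeasible d v S B}.Nonempty :=
    ⟨S.card + 1, VPFeasible_card_succ d v hv S⟩
  exact Nat.sInf_mem hne

/-- The total mass lower-bounds `d * OPT`. -/
lemma total_le_d_mul_opt (d : ℕ) {ι : Type*} [DecidableEq ι] (v : ι → Fin d → ℝ)
    (hv : ∀ i c, 0 ≤ v i c ∧ v i c ≤ 1) (S : Finset ι) :
    ∑ i ∈ S, ∑ c, v i c ≤ (d : ℝ) * VPopt d v S := by
  classical
  obtain ⟨f, hf⟩ := VPopt_feasible d v hv S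
  have hsplit : ∑ i ∈ S, ∑ c, v i c
      = ∑ j : Fin (VPopt d v S), ∑ i ∈ S.filter (fun i => f i = j), ∑ c, v i c :=
    (Finset.sum_fiberwise_of_maps_to (fun i _ => Finset.mem_univ (f i))
      (fun i => ∑ c, v i c)).symm
  rw [hsplit]
  calc ∑ j : Fin (VPopt d v S), ∑ i ∈ S.filter (fun i => f i = j), ∑ c, v i c
      = ∑ j : Fin (VPopt d v S), ∑ c, ∑ i ∈ S.filter (fun i => f i = j), v i c := by
        refine Finset.sum_congr rfl fun j _ => Finset.sum_comm
    _ ≤ ∑ _j : Fin (VPopt d v S), ∑ _c : Fin d, (1 : ℝ) := by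
        refine Finset.sum_le_sum fun j _ => Finset.sum_le_sum fun c _ => hf j c
    _ = ((VPopt d v S : ℕ) : ℝ) * d := by simp [mul_comm]
    _ = (d : ℝ) * (VPopt d v S : ℝ) := by ring

/-- Merging two mergeable bins gives a packing with one fewer bin. -/
lemma merge_bins (d : ℕ) {ι : Type*} [DecidableEq ι] (v : ι → Fin d → ℝ)
    (hv0 : ∀ i c, 0 ≤ v i c) (S : Finset ι) (A' : ℕ) (f : ι → Fin (A' + 1))
    (hf : ∀ j c, ∑ i ∈ S.filter (fun i => f i = j), v i c ≤ 1)
    (j1 j2 : Fin (A' + 1)) (hne : j1 ≠ j2)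
    (hmerge : ∀ c, (∑ i ∈ S.filter (fun i => f i = j1), v i c)
        + ∑ i ∈ S.filter (fun i => f i = j2), v i c ≤ 1) :
    VPFeasible d v S A' := by
  classical
  set g : ι → Fin (A' + 1) := fun i => if f i = j2 then j1 else f i with hg
  have hgne : ∀ i, g i ≠ j2 := by
    intro i
    simp only [hg]
    split
    · exact hne
    · assumption
  set σ := Equiv.swap j2 (Fin.last A') with hσ
  have hσlast : ∀ i, σ (g i) ≠ Fin.last A' := by
    intro i h
    apply hgne i
    have := congrArg σ.symm h
    simpa [hσ] using this
  refine ⟨fun i => (σ (g i)).castPred (hσlast i), fun k c => ?_⟩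
  set m := σ (Fin.castSucc k) with hm
  have hmj2 : m ≠ j2 := by
    intro h
    have h2 := congrArg σ.symm h
    rw [hm] at h2
    simp only [hσ, Equiv.symm_swap, Equiv.swap_apply_self, Equiv.swap_apply_left] at h2
    exact (Fin.castSucc_lt_last k).ne h2
  have hfib : S.filter (fun i => (σ (g i)).castPred (hσlast i) = k)
      = S.filter (fun i => g i = m) := by
    refine Finset.filter_congr fun i _ => ?_
    constructor
    · intro h
      have h1 : σ (g i) = Fin.castSucc k := by
        rw [← Fin.castSucc_castPred (σ (g i)) (hσlast i), h]
      have h2 : g i = σ.symm (Fin.castSucc k) := by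
        rw [← h1, Equiv.symm_apply_apply]
      rw [hm]
      simpa [hσ] using h2
    · intro h
      have h1 : σ (g i) = Fin.castSucc k := by
        rw [h, hm]
        simp [hσ, Equiv.swap_apply_self]
      apply Fin.castSucc_injective
      rw [Fin.castSucc_castPred, h1]
  rw [hfib]
  by_cases hmj1 : m = j1
  · subst hmj1
    have hfib2 : S.filter (fun i => g i = m) =
        S.filter (fun i => f i = m) ∪ S.filter (fun i => f i = j2) := by
      ext i
      simp only [Finset.mem_filter, Finset.mem_union, hg]
      constructor
      · rintro ⟨hiS, hi⟩
        by_cases h : f i = j2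
        · exact Or.inr ⟨hiS, h⟩
        · rw [if_neg h] at hi; exact Or.inl ⟨hiS, hi⟩
      · rintro (⟨hiS, hi⟩ | ⟨hiS, hi⟩)
        · refine ⟨hiS, ?_⟩
          rw [if_neg (by rw [hi]; exact hmj2), hi]
        · exact ⟨hiS, by rw [if_pos hi]⟩
    rw [hfib2, Finset.sum_union]
    · exact hmerge c
    · exact Finset.disjoint_filter.mpr fun i _ h1 h2 => hmj2 (by rw [← h1]; exact h2)
  · have hfib2 : S.filter (fun i => g i = m) = S.filter (fun i => f i = m) := by
      refine Finset.filter_congr fun i _ => ?_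
      simp only [hg]
      constructor
      · intro h
        by_cases h' : f i = j2
        · rw [if_pos h'] at h; exact absurd h.symm hmj1
        · rwa [if_neg h'] at h
      · intro h
        rw [if_neg (by rw [h]; exact hmj2), h]
    rw [hfib2]
    exact hf m c

/-- In a cluster with `OPT ≥ 2`, `OPT ≤ 2 ·` (total mass). -/
lemma opt_le_two_mul_total (d : ℕ) {ι : Type*} [DecidableEq ι] (v : ι → Fin d → ℝ)
    (hv : ∀ i c, 0 ≤ v i c ∧ v i c ≤ 1) (S : Finset ι) (h2 : 2 ≤ VPopt d v S) :
    (VPopt d v S : ℝ) ≤ 2 * ∑ i ∈ S, ∑ c, v i c := by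
  classical
  have hfe := VPopt_feasible d v hv S
  have hopt : ¬ VPFeasible d v S (VPopt d v S - 1) := by
    intro hfeas
    have h : VPopt d v S ≤ VPopt d v S - 1 :=
      Nat.sInf_le (s := {B | VPFeasible d v S B}) hfeas
    omega
  obtain ⟨A', hA'⟩ : ∃ A', VPopt d v S = A' + 1 := ⟨VPopt d v S - 1, by omega⟩
  have hA1 : 1 ≤ A' := by omega
  rw [hA'] at hfe
  rw [hA']
  have hnot : ¬ VPFeasible d v S A' := by
    have : VPopt d v S - 1 = A' := by omega
    rwa [this] at hopt
  obtain ⟨f, hf⟩ := hfe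
  set T : Fin (A' + 1) → ℝ := fun j => ∑ c, ∑ i ∈ S.filter (fun i => f i = j), v i c with hT
  have hT0 : ∀ j, 0 ≤ T j := fun j =>
    Finset.sum_nonneg fun c _ => Finset.sum_nonneg fun i _ => (hv i c).1
  have hX : ∑ i ∈ S, ∑ c, v i c = ∑ j, T j := by
    rw [← Finset.sum_fiberwise_of_maps_to (fun i _ => Finset.mem_univ (f i))
      (fun i => ∑ c, v i c)]
    exact Finset.sum_congr rfl fun j _ => Finset.sum_comm
  have hpair : ∀ j1 j2 : Fin (A' + 1), j1 ≠ j2 → 1 ≤ T j1 + T j2 := by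
    intro j1 j2 hne
    by_contra hcon
    push_neg at hcon
    have hmerge : ∀ c, (∑ i ∈ S.filter (fun i => f i = j1), v i c)
        + ∑ i ∈ S.filter (fun i => f i = j2), v i c ≤ 1 := by
      intro c
      have h1 : ∑ i ∈ S.filter (fun i => f i = j1), v i c ≤ T j1 :=
        Finset.single_le_sum (f := fun c => ∑ i ∈ S.filter (fun i => f i = j1), v i c)
          (fun c _ => Finset.sum_nonneg fun i _ => (hv i c).1) (Finset.mem_univ c)
      have hh2 : ∑ i ∈ S.filter (fun i => f i = j2), v i c ≤ T j2 :=
        Finset.single_le_sum (f := fun c => ∑ i ∈ S.filter (fun i => f i = j2), v i c)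
          (fun c _ => Finset.sum_nonneg fun i _ => (hv i c).1) (Finset.mem_univ c)
      linarith
    exact hnot (merge_bins d v (fun i c => (hv i c).1) S A' f hf j1 j2 hne hmerge)
  -- sum the pairwise inequality over all ordered pairs
  have key : ∑ j1 : Fin (A' + 1), ∑ j2 ∈ Finset.univ.erase j1, (1 : ℝ)
      ≤ ∑ j1 : Fin (A' + 1), ∑ j2 ∈ Finset.univ.erase j1, (T j1 + T j2) := by
    refine Finset.sum_le_sum fun j1 _ => Finset.sum_le_sum fun j2 hj2 => ?_
    exact hpair j1 j2 (Ne.symm (Finset.ne_of_mem_erase hj2))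
  have hl : ∑ j1 : Fin (A' + 1), ∑ j2 ∈ Finset.univ.erase j1, (1 : ℝ)
      = ((A' : ℝ) + 1) * A' := by
    have h1 : ∀ j1 : Fin (A' + 1), ∑ j2 ∈ Finset.univ.erase j1, (1 : ℝ) = (A' : ℝ) := by
      intro j1
      rw [Finset.sum_const, Finset.card_erase_of_mem (Finset.mem_univ j1),
        Finset.card_univ, Fintype.card_fin]
      simp
    rw [Finset.sum_congr rfl fun j1 _ => h1 j1, Finset.sum_const,
      Finset.card_univ, Fintype.card_fin, nsmul_eq_mul]
    push_cast
    ring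
  have hr : ∑ j1 : Fin (A' + 1), ∑ j2 ∈ Finset.univ.erase j1, (T j1 + T j2)
      = 2 * (A' : ℝ) * ∑ j, T j := by
    have h1 : ∀ j1 : Fin (A' + 1), ∑ j2 ∈ Finset.univ.erase j1, (T j1 + T j2)
        = (A' : ℝ) * T j1 + ((∑ j, T j) - T j1) := by
      intro j1
      rw [Finset.sum_add_distrib, Finset.sum_const,
        Finset.card_erase_of_mem (Finset.mem_univ j1), Finset.card_univ, Fintype.card_fin,
        Finset.sum_erase_eq_sub (Finset.mem_univ j1)]
      simp [nsmul_eq_mul]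
    rw [Finset.sum_congr rfl fun j1 _ => h1 j1, Finset.sum_add_distrib,
      Finset.sum_sub_distrib, Finset.sum_const, Finset.card_univ, Fintype.card_fin,
      ← Finset.mul_sum, nsmul_eq_mul]
    push_cast
    ring
  rw [hl, hr] at key
  have hA1R : (1 : ℝ) ≤ (A' : ℝ) := by exact_mod_cast hA1
  rw [hX]
  push_cast
  nlinarith [key, hA1R]

theorem stmt_13 {ι : Type*} [DecidableEq ι] (d : ℕ) (hd : 2 ≤ d)
    (v : ι → Fin d → ℝ) (hv : ∀ i c, 0 ≤ v i c ∧ v i c ≤ 1)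
    (ℓ : ℕ) (C : Fin ℓ → Finset ι)
    (hdisj : ∀ j j', j ≠ j' → Disjoint (C j) (C j'))
    (I : Finset ι) (hI : I = Finset.univ.biUnion C)
    (h2 : ∀ j, 2 ≤ VPopt d v (C j)) :
    ∑ j, VPopt d v (C j) ≤ 2 * d * VPopt d v I := by
  classical
  have key : ((∑ j, VPopt d v (C j) : ℕ) : ℝ) ≤ ((2 * d * VPopt d v I : ℕ) : ℝ) := by
    push_cast
    have hsplit : ∑ i ∈ I, ∑ c, v i c = ∑ j, ∑ i ∈ C j, ∑ c, v i c := by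
      rw [hI]
      exact Finset.sum_biUnion (fun j _ j' _ h => hdisj j j' h)
    calc (∑ j, (VPopt d v (C j) : ℝ))
        ≤ ∑ j, 2 * ∑ i ∈ C j, ∑ c, v i c := by
          refine Finset.sum_le_sum fun j _ => opt_le_two_mul_total d v hv (C j) (h2 j)
      _ = 2 * ∑ i ∈ I, ∑ c, v i c := by
          rw [hsplit, Finset.mul_sum]
      _ ≤ 2 * ((d : ℝ) * VPopt d v I) := by
          have := total_le_d_mul_opt d v hv I
          linarith
      _ = 2 * (d : ℝ) * VPopt d v I := by ring
  exact_mod_cast key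
end

section
/- For integers k ≥ 2, under the weight function w(x) = (2(k-1)/k)·x + 1/k, any bin with at most k items of total size at most 1 has total weight at most (3k-2)/k = 3 - 2/k. -/
theorem stmt_15 (k : ℕ) (hk : 2 ≤ k) (m : ℕ) (hm : m ≤ k)
    (s : Fin m → ℝ) (hs : ∀ i, 0 ≤ s i ∧ s i ≤ 1) (hsum : ∑ i, s i ≤ 1) :
    ∑ i, (2 * ((k : ℝ) - 1) / k * s i + 1 / k) ≤ (3 * (k : ℝ) - 2) / k := by
  have hk0 : (0:ℝ) < k := by exact_mod_cast Nat.lt_of_lt_of_le (by norm_num) hk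
  have hc : (0:ℝ) ≤ 2 * ((k : ℝ) - 1) / k := by
    have : (1:ℝ) ≤ k := by exact_mod_cast Nat.one_le_of_lt hk
    have := hk0
    apply div_nonneg <;> linarith
  have hm' : (m:ℝ) ≤ k := by exact_mod_cast hm
  calc ∑ i, (2 * ((k : ℝ) - 1) / k * s i + 1 / k)
      = 2 * ((k : ℝ) - 1) / k * (∑ i, s i) + m * (1/k) := by
        rw [Finset.sum_add_distrib, ← Finset.mul_sum, Finset.sum_const]
        simp [mul_comm]
    _ ≤ 2 * ((k : ℝ) - 1) / k * 1 + k * (1/k) := by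
        gcongr <;> first | exact one_div_nonneg.mpr hk0.le | skip
    _ ≤ (3 * (k : ℝ) - 2) / k := by field_simp; ring_nf; linarith
end

section
/- For integers k ≥ 2, under the weight function w(x) = (2(k-2)/k)·x + 1/k for x ≤ 1/2 and w(x) = (2(k-2)/k)·x + 2/k for x > 1/2, any bin with at most k items of total size at most 1 has total weight at most (3k-3)/k = 3 - 3/k. -/
theorem stmt_17 (k : ℕ) (hk : 2 ≤ k) (m : ℕ) (hm : m ≤ k)
    (s : Fin m → ℝ) (hs : ∀ i, 0 ≤ s i ∧ s i ≤ 1) (hsum : ∑ i, s i ≤ 1) :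
    ∑ i, (if s i ≤ 1 / 2 then 2 * ((k : ℝ) - 2) / k * s i + 1 / k
          else 2 * ((k : ℝ) - 2) / k * s i + 2 / k)
      ≤ (3 * (k : ℝ) - 3) / k := by
  have hk' : (2:ℝ) ≤ (k:ℝ) := by exact_mod_cast hk
  have hkpos : (0:ℝ) < (k:ℝ) := by linarith
  set c : ℝ := 2 * ((k:ℝ) - 2) / k with hc
  have hc0 : 0 ≤ c := div_nonneg (by linarith) (le_of_lt hkpos)
  -- rewrite each summand
  have hpt : ∀ i : Fin m,
      (if s i ≤ 1 / 2 then c * s i + 1 / k else c * s i + 2 / k)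
      = c * s i + 1 / k + (if s i ≤ 1 / 2 then 0 else 1 / (k:ℝ)) := by
    intro i; split_ifs <;> ring
  have hsplit : ∑ i, (if s i ≤ 1 / 2 then c * s i + 1 / k else c * s i + 2 / k)
      = c * (∑ i, s i) + (m : ℝ) * (1 / k)
        + ∑ i, (if s i ≤ 1 / 2 then 0 else 1 / (k:ℝ)) := by
    simp only [hpt, Finset.sum_add_distrib, Finset.mul_sum, Finset.sum_const,
      Finset.card_univ, Fintype.card_fin, nsmul_eq_mul]
  -- at most one big item
  have hbig : ∑ i, (if s i ≤ 1 / 2 then 0 else 1 / (k:ℝ)) ≤ 1 / k := by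
    classical
    have hcard : (Finset.univ.filter (fun i : Fin m => ¬ s i ≤ 1/2)).card ≤ 1 := by
      rw [Finset.card_le_one]
      intro i hi j hj
      by_contra hij
      simp only [Finset.mem_filter] at hi hj
      have h1 : (1:ℝ) < s i + s j := by
        push_neg at hi hj; linarith [hi.2, hj.2]
      have h2 : s i + s j ≤ ∑ t, s t := by
        have hsub : ({i, j} : Finset (Fin m)) ⊆ Finset.univ := Finset.subset_univ _
        have := Finset.sum_le_sum_of_subset_of_nonneg hsub
          (fun t _ _ => (hs t).1)
        rwa [Finset.sum_pair hij] at this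
      linarith
    calc ∑ i, (if s i ≤ 1 / 2 then 0 else 1 / (k:ℝ))
        = ∑ i ∈ Finset.univ.filter (fun i : Fin m => ¬ s i ≤ 1/2), 1 / (k:ℝ) := by
          rw [Finset.sum_filter]
          apply Finset.sum_congr rfl
          intro i _
          split_ifs <;> simp_all
      _ = ((Finset.univ.filter (fun i : Fin m => ¬ s i ≤ 1/2)).card : ℝ) * (1/k) := by
          rw [Finset.sum_const, nsmul_eq_mul]
      _ ≤ 1 * (1/k) := by
          apply mul_le_mul_of_nonneg_right _ (by positivity)
          exact_mod_cast hcard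
      _ = 1 / k := by ring
  rw [hsplit]
  have hs0 : 0 ≤ ∑ i, s i := Finset.sum_nonneg fun i _ => (hs i).1
  have h1 : c * (∑ i, s i) ≤ c := by
    calc c * (∑ i, s i) ≤ c * 1 := mul_le_mul_of_nonneg_left hsum hc0
      _ = c := mul_one c
  have hm' : (m:ℝ) ≤ (k:ℝ) := by exact_mod_cast hm
  have h2 : (m:ℝ) * (1/k) ≤ 1 := by
    rw [mul_one_div, div_le_one hkpos]; exact hm'
  have hceq : c = (2*(k:ℝ) - 4) / k := by rw [hc]; ring_nf
  have hfin : (2*(k:ℝ) - 4)/k + 1 + 1/k = (3*(k:ℝ)-3)/k := by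
    field_simp; ring
  linarith [h1, h2, hbig, hceq ▸ h1]
end

section
/- For integers k ≥ 4, under the weight function w(x) = 1/k + (5(k-2)/(3k))·x, any bin with at most k items of total size at most 1 has total weight at most 8/3 - 10/(3k); and any bin with at least two items and total size greater than 3/5 has weight at least 1, while any bin with k items has weight at least 1. -/
theorem stmt_18 (k : ℕ) (hk : 4 ≤ k) :
    (∀ (m : ℕ), m ≤ k → ∀ s : Fin m → ℝ, (∀ i, 0 ≤ s i ∧ s i ≤ 2 / 5) →
      (∑ i, s i ≤ 1) →
      ∑ i, (1 / (k : ℝ) + 5 * ((k : ℝ) - 2) / (3 * k) * s i) ≤ 8 / 3 - 10 / (3 * k)) ∧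
    (∀ (m : ℕ), 2 ≤ m → ∀ s : Fin m → ℝ, (∀ i, 0 ≤ s i ∧ s i ≤ 2 / 5) →
      (3 / 5 : ℝ) < ∑ i, s i →
      1 ≤ ∑ i, (1 / (k : ℝ) + 5 * ((k : ℝ) - 2) / (3 * k) * s i)) ∧
    (∀ s : Fin k → ℝ, (∀ i, 0 ≤ s i) →
      1 ≤ ∑ i, (1 / (k : ℝ) + 5 * ((k : ℝ) - 2) / (3 * k) * s i)) := by
  have hk0 : (0:ℝ) < k := by positivity
  have hk4 : (4:ℝ) ≤ k := by exact_mod_cast hk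
  have hc : 0 ≤ 5 * ((k : ℝ) - 2) / (3 * k) := by
    apply div_nonneg _ (by positivity); linarith
  have key : ∀ (m : ℕ) (s : Fin m → ℝ),
      ∑ i, (1 / (k : ℝ) + 5 * ((k : ℝ) - 2) / (3 * k) * s i)
        = m / k + 5 * ((k : ℝ) - 2) / (3 * k) * ∑ i, s i := by
    intro m s
    rw [Finset.sum_add_distrib, Finset.sum_const, ← Finset.mul_sum]
    simp [div_eq_mul_inv, mul_comm]
  refine ⟨?_, ?_, ?_⟩
  · intro m hm s hs hsum
    rw [key]
    have hmk : (m:ℝ) ≤ k := by exact_mod_cast hm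
    have h1 : 5 * ((k : ℝ) - 2) / (3 * k) * ∑ i, s i ≤ 5 * ((k : ℝ) - 2) / (3 * k) := by
      nlinarith [mul_le_mul_of_nonneg_left hsum hc]
    have h2 : (m:ℝ)/k ≤ 1 := by rw [div_le_one hk0]; exact hmk
    have : 5 * ((k : ℝ) - 2) / (3 * k) = 5/3 - 10/(3*k) := by
      field_simp; ring
    linarith
  · intro m hm s hs hsum
    rw [key]
    have hmk : (2:ℝ) ≤ m := by exact_mod_cast hm
    have h2 : (2:ℝ)/k ≤ m/k := by
      exact div_le_div_of_nonneg_right hmk hk0.le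
    have h1 : 5 * ((k : ℝ) - 2) / (3 * k) * (3/5) ≤ 5 * ((k : ℝ) - 2) / (3 * k) * ∑ i, s i :=
      mul_le_mul_of_nonneg_left hsum.le hc
    have h3 : (2:ℝ)/k + 5 * ((k : ℝ) - 2) / (3 * k) * (3/5) = 1 := by
      field_simp; ring
    linarith
  · intro s hs
    rw [key]
    have h1 : (k:ℝ)/k = 1 := div_self hk0.ne'
    have h2 : 0 ≤ ∑ i, s i := Finset.sum_nonneg fun i _ => hs i
    nlinarith
end

section
/- For integers t ≥ 2 and k > t, under the weight function w(x) = ((k-t)/k)·((t+1)/t)·x + 1/k: (a) any bin with at most k items of total size at most 1 has total weight at most 1 + (k-t)(t+1)/(kt); (b) any bin with at least t items and total size at least t/(t+1) has total weight at least 1; (c) any bin with k items has total weight at least 1. -/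
theorem stmt_19 (k t : ℕ) (ht : 2 ≤ t) (hkt : t < k) :
    (∀ (m : ℕ), m ≤ k → ∀ s : Fin m → ℝ, (∀ i, 0 ≤ s i ∧ s i ≤ 1) →
      (∑ i, s i ≤ 1) →
      ∑ i, (((k : ℝ) - t) / k * (((t : ℝ) + 1) / t) * s i + 1 / k)
        ≤ 1 + ((k : ℝ) - t) * ((t : ℝ) + 1) / ((k : ℝ) * t)) ∧
    (∀ (m : ℕ), t ≤ m → ∀ s : Fin m → ℝ, (∀ i, 0 ≤ s i) →
      ((t : ℝ) / ((t : ℝ) + 1) ≤ ∑ i, s i) →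
      1 ≤ ∑ i, (((k : ℝ) - t) / k * (((t : ℝ) + 1) / t) * s i + 1 / k)) ∧
    (∀ s : Fin k → ℝ, (∀ i, 0 ≤ s i) →
      1 ≤ ∑ i, (((k : ℝ) - t) / k * (((t : ℝ) + 1) / t) * s i + 1 / k)) := by
  have ht' : (2:ℝ) ≤ (t:ℝ) := by exact_mod_cast ht
  have hk' : (t:ℝ) < (k:ℝ) := by exact_mod_cast hkt
  have ht0 : (0:ℝ) < t := by linarith
  have hk0 : (0:ℝ) < k := by linarith
  have hkt' : (0:ℝ) ≤ (k:ℝ) - t := by linarith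
  have hc : 0 ≤ ((k:ℝ) - t) / k * (((t:ℝ) + 1) / t) := by
    apply mul_nonneg (div_nonneg hkt' hk0.le) (div_nonneg (by linarith) ht0.le)
  set c : ℝ := ((k:ℝ) - t) / k * (((t:ℝ) + 1) / t) with hc_def
  have hsum : ∀ (m : ℕ) (s : Fin m → ℝ),
      ∑ i, (c * s i + 1 / k) = c * (∑ i, s i) + m / k := by
    intro m s
    rw [Finset.sum_add_distrib, ← Finset.mul_sum, Finset.sum_const,
      Finset.card_univ, Fintype.card_fin, nsmul_eq_mul, mul_one_div]
  refine ⟨?_, ?_, ?_⟩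
  · intro m hm s _ hS
    rw [hsum]
    have hmk : (m:ℝ) ≤ k := by exact_mod_cast hm
    have h1 : c * (∑ i, s i) ≤ c * 1 := by
      exact mul_le_mul_of_nonneg_left hS hc
    have h2 : (m:ℝ)/k ≤ 1 := by
      rw [div_le_one hk0]; exact hmk
    have hc1 : c * 1 = ((k:ℝ) - t) * ((t:ℝ) + 1) / ((k:ℝ) * t) := by
      rw [hc_def]; field_simp
    linarith
  · intro m hm s _ hS
    rw [hsum]
    have hmk : (t:ℝ) ≤ m := by exact_mod_cast hm
    have h1 : c * ((t:ℝ)/((t:ℝ)+1)) ≤ c * (∑ i, s i) :=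
      mul_le_mul_of_nonneg_left hS hc
    have h2 : (t:ℝ)/k ≤ (m:ℝ)/k := by gcongr
    have hc1 : c * ((t:ℝ)/((t:ℝ)+1)) = ((k:ℝ) - t)/k := by
      rw [hc_def]; field_simp
    have h3 : ((k:ℝ) - t)/k + (t:ℝ)/k = 1 := by field_simp; ring
    linarith
  · intro s hs
    rw [hsum]
    have h1 : 0 ≤ c * (∑ i, s i) := by
      apply mul_nonneg hc (Finset.sum_nonneg fun i _ => hs i)
    have : (k:ℝ)/k = 1 := div_self (ne_of_gt hk0)
    linarith
end
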